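/- General matter-brane screening: in the chord-space model with 0<q<1, r ∈ ℝ, an integer k ≥ 1, and nonzero complex α₁,…,α_k with |α_{i+1}|·|r|^i < |α₁| for 1 ≤ i ≤ k−1, the matter-brane states V_m^{(α_k,…,α₁)} satisfy, coordinatewise on binary strings, a_{R,0} V_m^{(α_k,…,α₁)} = [m]_q·V_{m−1}^{(α_k,…,α₁)} + α₁·r·q^m·V_m^{(α_k,…,α₁)} (for m = 0 the first term is absent since [0]_q = 0). Hence a right-boundary observer acting with a_{R,0}, a†_{R,0} cannot distinguish the k-matter brane state from a single EoW brane of effective tension μ = α₁·r: the k−1 additional matter chords are completely screened. -/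

import Mathlib

namespace DSSYK

/-- Binary strings (chord words); the letter `0` is `false`, the letter `1` is `true`. -/
abbrev Str : Type := List Bool

/-- The chord space: finitely supported complex functions on binary strings. -/
abbrev Sp : Type := Str →₀ ℂ

/-- Crossing weights: `Q 0 0 = q`, `Q 1 1 = q_m`, mixed crossings give `r`. -/
def Qmat (q qm r : ℝ) : Bool → Bool → ℂ
  | false, false => (q : ℂ)
  | true,  true  => (qm : ℂ)
  | _,     _     => (r : ℂ)

/-- Right creation `a†_{R,i}`: append the letter `i` on the right. -/
noncomputable def creR (i : Bool) : Sp →ₗ[ℂ] Sp :=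
  Finsupp.lift Sp ℂ Str fun w => Finsupp.single (w ++ [i]) 1

/-- Value of the right annihilation operator on a basis string: delete one letter
equal to `i`, weighted by the crossing factors with all letters to its right. -/
noncomputable def annVecR (Q : Bool → Bool → ℂ) (i : Bool) : Str → Sp
  | [] => 0
  | x :: t =>
      (if x = i then ((t.map (Q i)).prod) • Finsupp.single t (1 : ℂ) else 0)
        + Finsupp.mapDomain (List.cons x) (annVecR Q i t)

/-- Right annihilation `a_{R,i}`. -/
noncomputable def annR (Q : Bool → Bool → ℂ) (i : Bool) : Sp →ₗ[ℂ] Sp :=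
  Finsupp.lift Sp ℂ Str (annVecR Q i)

/-- Left creation `a†_{L,i}`: prepend the letter `i`. -/
noncomputable def creL (i : Bool) : Sp →ₗ[ℂ] Sp :=
  Finsupp.lift Sp ℂ Str fun w => Finsupp.single (i :: w) 1

/-- Value of the left annihilation operator on a basis string: delete one letter
equal to `i`, weighted by the crossing factors with all letters to its left. -/
noncomputable def annVecL (Q : Bool → Bool → ℂ) (i : Bool) : Str → Sp
  | [] => 0
  | x :: t =>
      (if x = i then Finsupp.single t (1 : ℂ) else 0)
        + Q i x • Finsupp.mapDomain (List.cons x) (annVecL Q i t)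

/-- Left annihilation `a_{L,i}`. -/
noncomputable def annL (Q : Bool → Bool → ℂ) (i : Bool) : Sp →ₗ[ℂ] Sp :=
  Finsupp.lift Sp ℂ Str (annVecL Q i)

/-- Diagonal weight operator `δ_w ↦ c₀^{N₀(w)} · c₁^{N₁(w)} · δ_w`, where `N₀, N₁`
count the `0`'s and `1`'s in `w`. -/
noncomputable def Wgen (c₀ c₁ : ℂ) : Sp →ₗ[ℂ] Sp :=
  Finsupp.lift Sp ℂ Str fun w =>
    Finsupp.single w (c₀ ^ (w.count false) * c₁ ^ (w.count true))

/-- The chord-counting weight operator `W δ_w = q^{N₀(w)} r^{N₁(w)} δ_w`. -/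
noncomputable def Wop (q r : ℝ) : Sp →ₗ[ℂ] Sp := Wgen (q : ℂ) (r : ℂ)

/-- Right boundary operators `H_{R,i} = a_{R,i} + a†_{R,i}`. -/
noncomputable def HR (Q : Bool → Bool → ℂ) (i : Bool) : Sp →ₗ[ℂ] Sp := annR Q i + creR i

/-- Left boundary operators `H_{L,i} = a_{L,i} + a†_{L,i}`. -/
noncomputable def HL (Q : Bool → Bool → ℂ) (i : Bool) : Sp →ₗ[ℂ] Sp := annL Q i + creL i

/-- The vacuum `ω = δ_{[]}` (the empty string). -/
noncomputable def vac : Sp := Finsupp.single [] 1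

/-- `ε v = v([])`, the coefficient of the empty string. -/
def eps (v : Sp) : ℂ := v []

end DSSYK

namespace DSSYK

/-- The q-integer `[n]_q = (1 − qⁿ)/(1 − q)` (as a complex number). -/
noncomputable def qIntC (q : ℝ) (n : ℕ) : ℂ := (1 - (q : ℂ) ^ n) / (1 - (q : ℂ))

/-- The q-factorial `[n]!_q = Π_{j=1}^{n} [j]_q` (as a complex number). -/
noncomputable def qFactC (q : ℝ) (n : ℕ) : ℂ := ∏ j ∈ Finset.range n, qIntC q (j + 1)

/-- The q-Pochhammer symbol `(q;q)_n = Π_{j=0}^{n−1}(1 − q^{j+1})` (as a complex number). -/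
noncomputable def qPochQC (q : ℝ) (n : ℕ) : ℂ := ∏ j ∈ Finset.range n, (1 - (q : ℂ) ^ (j + 1))

/-- The infinite q-Pochhammer symbol `(x;q)_∞ = Π_{j=0}^{∞}(1 − x qʲ)`. -/
noncomputable def qPochInfC (q : ℝ) (x : ℂ) : ℂ := ∏' j : ℕ, (1 - x * (q : ℂ) ^ j)

end DSSYK

namespace DSSYK

/-- Coordinatewise (transpose) extension of an operator `T` on the chord space to
arbitrary coefficient functions on binary strings:
`(T f)(u) = Σ_w T_{u,w} f(w)`, where `T_{u,w}` is the coefficient of `δ_u` in `T δ_w`. -/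
noncomputable def coordAct (T : Sp →ₗ[ℂ] Sp) (f : Str → ℂ) : Str → ℂ :=
  fun u => ∑' w : Str, (T (Finsupp.single w 1)) u * f w

/-- The string `0^{n_k} 1 0^{n_{k−1}} 1 ⋯ 0^{n_1} 1 0^m` (recursion in `k`). -/
def braneString (ns : ℕ → ℕ) (m : ℕ) : ℕ → Str
  | 0 => List.replicate m false
  | k + 1 => List.replicate (ns (k + 1)) false ++ true :: braneString ns m k

/-- The coefficient of the `k`-matter brane state on the string with zero-block
lengths `n_k, …, n_1` (and final block `m`):
`(Π_{i=1}^{k} α_i^{n_i}/[n_i]!_q) · Π_{i=1}^{k−1} ((α_{i+1} rᶦ q^{n_1+⋯+n_i}/α₁; q)_∞)⁻¹`. -/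
noncomputable def braneCoeff (q r : ℝ) (α : ℕ → ℂ) (k : ℕ) (ns : ℕ → ℕ) : ℂ :=
  (∏ i ∈ Finset.Icc 1 k, α i ^ ns i / qFactC q (ns i)) *
    ∏ i ∈ Finset.Icc 1 (k - 1),
      (qPochInfC q
        (α (i + 1) * (r : ℂ) ^ i * (q : ℂ) ^ (∑ j ∈ Finset.Icc 1 i, ns j) / α 1))⁻¹

open Classical in
/-- The `k`-matter brane state `V_m^{(α_k,…,α₁)}`, as a coefficient function on binary
strings: supported on strings `0^{n_k} 1 0^{n_{k−1}} 1 ⋯ 0^{n_1} 1 0^m`, where it takes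
the value `braneCoeff`. -/
noncomputable def braneState (q r : ℝ) (α : ℕ → ℂ) (k m : ℕ) (w : Str) : ℂ :=
  if h : ∃ ns : ℕ → ℕ, w = braneString ns m k then braneCoeff q r α k h.choose else 0

end DSSYK
set_option linter.dupNamespace false
namespace DSSYK
open Finset
lemma annVecR_apply (Q : Bool → Bool → ℂ) (w u : Str) :
    annVecR Q false w u
      = ∑ j ∈ (Finset.range (u.length + 1)).filter
          (fun j => u.insertIdx j false = w), ((u.drop j).map (Q false)).prod := by
  classical
  induction w generalizing u with
  | nil =>
    rw [Finset.sum_eq_zero]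
    · simp [annVecR]
    · intro j hj
      simp only [Finset.mem_filter, Finset.mem_range] at hj
      exfalso
      have hlen : (u.insertIdx j false).length = u.length + 1 :=
        List.length_insertIdx_of_le_length (Nat.lt_succ_iff.mp hj.1) false
      rw [hj.2] at hlen
      simp at hlen
  | cons x t ih =>
    rw [Finset.sum_filter]
    cases u with
    | nil =>
      simp only [List.length_nil, zero_add, Finset.range_one, Finset.sum_singleton,
        List.insertIdx_zero, List.drop_nil, List.map_nil, List.prod_nil]
      simp only [annVecR, Finsupp.add_apply]
      rw [Finsupp.mapDomain_notin_range _ _ (by rintro ⟨a, ha⟩; simp at ha), add_zero]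
      cases x with
      | false =>
        by_cases ht : t = []
        · subst ht; simp
        · split_ifs with hc <;> simp_all [Finsupp.single_apply, eq_comm]
      | true =>
        split_ifs with hc <;> simp_all
    | cons y s =>
      simp only [List.length_cons]
      rw [Finset.sum_range_succ']
      have h0 : (if (List.insertIdx (y :: s) 0 false = x :: t) then
            (((y :: s).drop 0).map (Q false)).prod else 0)
          = (if x = false then ((t.map (Q false)).prod) • Finsupp.single t (1:ℂ) else 0) (y :: s) := by
        rw [List.insertIdx_zero]
        by_cases hx : x = false
        · subst hx
          by_cases hts : t = y :: s
          · subst hts; simp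
          · rw [if_neg (by simp [List.cons.injEq, Ne.symm hts]), if_pos rfl]
            simp [Finsupp.single_apply, hts]
        · rw [if_neg (fun hc => hx (((List.cons.injEq ..).mp hc).1.symm)), if_neg hx]
          simp
      have h1 : ∀ j, (if (List.insertIdx (y :: s) (j+1) false = x :: t) then
            (((y :: s).drop (j+1)).map (Q false)).prod else 0)
          = if (y = x ∧ List.insertIdx s j false = t) then ((s.drop j).map (Q false)).prod else 0 := by
        intro j
        rw [List.insertIdx_succ_cons]
        simp [List.cons.injEq, and_comm]
      have h2 : Finsupp.mapDomain (List.cons x) (annVecR Q false t) (y :: s)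
          = ∑ j ∈ Finset.range (s.length + 1),
              if (y = x ∧ List.insertIdx s j false = t) then ((s.drop j).map (Q false)).prod else 0 := by
        by_cases hyx : y = x
        · subst hyx
          rw [Finsupp.mapDomain_apply (List.cons_injective) _ s, ih s, Finset.sum_filter]
          simp
        · rw [Finsupp.mapDomain_notin_range]
          · rw [Finset.sum_eq_zero]
            intro j _; simp [hyx]
          · rintro ⟨a, ha⟩
            exact hyx (((List.cons.injEq ..).mp ha.symm).1)
      simp only [annVecR, Finsupp.add_apply]
      rw [h2, h0]
      rw [Finset.sum_congr rfl (fun j _ => h1 j)]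
      ring
lemma annR_single (Q : Bool → Bool → ℂ) (i : Bool) (w : Str) :
    annR Q i (Finsupp.single w 1) = annVecR Q i w := by
  simp [annR, Finsupp.lift_apply, Finsupp.sum_single_index]

lemma coordAct_annR (Q : Bool → Bool → ℂ) (f : Str → ℂ) (u : Str) :
    coordAct (annR Q false) f u
      = ∑ j ∈ Finset.range (u.length + 1),
          ((u.drop j).map (Q false)).prod * f (u.insertIdx j false) := by
  classical
  unfold coordAct
  have hterm : ∀ w, (annR Q false (Finsupp.single w 1)) u * f w
      = ∑ j ∈ (Finset.range (u.length + 1)).filter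
          (fun j => u.insertIdx j false = w),
          ((u.drop j).map (Q false)).prod * f (u.insertIdx j false) := by
    intro w
    rw [annR_single, annVecR_apply, Finset.sum_mul]
    refine Finset.sum_congr rfl fun j hj => ?_
    rw [(Finset.mem_filter.mp hj).2]
  rw [tsum_eq_sum (s := (Finset.range (u.length + 1)).image (fun j => u.insertIdx j false))
    (fun w hw => ?_)]
  · rw [Finset.sum_congr rfl (fun w _ => hterm w)]
    exact Finset.sum_fiberwise_of_maps_to
      (fun j hj => Finset.mem_image_of_mem _ hj) _
  · rw [hterm w, Finset.sum_eq_zero]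
    intro j hj
    obtain ⟨hj1, hj2⟩ := Finset.mem_filter.mp hj
    exact absurd (hj2 ▸ Finset.mem_image_of_mem _ hj1) hw

lemma braneString_congr {ns ns' : ℕ → ℕ} {m : ℕ} : ∀ {k : ℕ},
    (∀ i ∈ Finset.Icc 1 k, ns i = ns' i) → braneString ns m k = braneString ns' m k := by
  intro k
  induction k with
  | zero => intro _; rfl
  | succ k ih =>
    intro h
    simp only [braneString]
    rw [h (k+1) (by simp), ih (fun i hi => h i (by
      simp only [Finset.mem_Icc] at hi ⊢; omega))]

lemma count_true_braneString (ns : ℕ → ℕ) (m : ℕ) : ∀ k, (braneString ns m k).count true = k := by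
  intro k
  induction k with
  | zero => simp [braneString, List.count_replicate]
  | succ k ih => simp [braneString, List.count_append, List.count_replicate, List.count_cons, ih]

lemma parse (u : Str) : ∃ ns m, u = braneString ns m (u.count true) := by
  induction u with
  | nil => exact ⟨fun _ => 0, 0, rfl⟩
  | cons x v ih =>
    obtain ⟨ns, m, hv⟩ := ih
    cases x with
    | false =>
      have hc : (false :: v).count true = v.count true := by simp [List.count_cons]
      rw [hc]
      cases hk : v.count true with
      | zero =>
        refine ⟨ns, m + 1, ?_⟩
        rw [hk] at hv
        simp only [braneString] at hv ⊢
        rw [hv, List.replicate_succ]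
      | succ k' =>
        refine ⟨Function.update ns (k' + 1) (ns (k' + 1) + 1), m, ?_⟩
        rw [hk] at hv
        have hcongr : braneString ns m k'
            = braneString (Function.update ns (k' + 1) (ns (k' + 1) + 1)) m k' :=
          braneString_congr (fun i hi => by
            have hne : i ≠ k' + 1 := by simp only [Finset.mem_Icc] at hi; omega
            rw [Function.update_of_ne hne])
        rw [hv]
        simp only [braneString, Function.update_self, List.replicate_succ, List.cons_append]
        rw [hcongr]
    | true =>
      have hc : (true :: v).count true = v.count true + 1 := by simp [List.count_cons]
      rw [hc]
      obtain ⟨c, hk⟩ : ∃ c, v.count true = c := ⟨_, rfl⟩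
      rw [hk] at hv ⊢
      refine ⟨Function.update ns (c + 1) 0, m, ?_⟩
      have hcongr : braneString ns m c
          = braneString (Function.update ns (c + 1) 0) m c :=
        braneString_congr (fun i hi => by
          have hne : i ≠ c + 1 := by simp only [Finset.mem_Icc] at hi; omega
          rw [Function.update_of_ne hne])
      simp only [braneString, Function.update_self, List.replicate_zero, List.nil_append]
      rw [hv, hcongr]

lemma replicate_append_inj : ∀ {a a' : ℕ} {R R' : Str},
    List.replicate a false ++ true :: R = List.replicate a' false ++ true :: R' →
    a = a' ∧ R = R' := by
  intro a
  induction a with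
  | zero =>
    intro a' R R' h
    cases a' with
    | zero => simpa using h
    | succ b => simp [List.replicate_succ] at h
  | succ b ih =>
    intro a' R R' h
    cases a' with
    | zero => simp [List.replicate_succ] at h
    | succ b' =>
      simp only [List.replicate_succ, List.cons_append, List.cons.injEq, true_and] at h
      obtain ⟨h1, h2⟩ := ih h
      exact ⟨by omega, h2⟩

lemma braneString_inj {ns ns' : ℕ → ℕ} {m m' : ℕ} : ∀ {k : ℕ},
    braneString ns m k = braneString ns' m' k →
    m = m' ∧ ∀ i ∈ Finset.Icc 1 k, ns i = ns' i := by
  intro k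
  induction k with
  | zero =>
    intro h
    refine ⟨?_, by simp⟩
    simpa [braneString] using congrArg List.length h
  | succ k ih =>
    intro h
    simp only [braneString] at h
    obtain ⟨h1, h2⟩ := replicate_append_inj h
    obtain ⟨hm, hns⟩ := ih h2
    refine ⟨hm, fun i hi => ?_⟩
    rcases Finset.mem_Icc.mp hi with ⟨hi1, hi2⟩
    rcases Nat.lt_or_ge i (k+1) with hlt | hge
    · exact hns i (Finset.mem_Icc.mpr ⟨hi1, by omega⟩)
    · have : i = k + 1 := by omega
      subst this; exact h1

lemma braneCoeff_congr {q r : ℝ} {α : ℕ → ℂ} {k : ℕ} {ns ns' : ℕ → ℕ}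
    (h : ∀ i ∈ Finset.Icc 1 k, ns i = ns' i) :
    braneCoeff q r α k ns = braneCoeff q r α k ns' := by
  unfold braneCoeff
  congr 1
  · exact Finset.prod_congr rfl fun i hi => by rw [h i hi]
  · refine Finset.prod_congr rfl fun i hi => ?_
    have : (∑ j ∈ Finset.Icc 1 i, ns j) = ∑ j ∈ Finset.Icc 1 i, ns' j := by
      refine Finset.sum_congr rfl fun j hj => h j ?_
      simp only [Finset.mem_Icc] at hi hj ⊢
      omega
    rw [this]

lemma braneState_eval (q r : ℝ) (α : ℕ → ℂ) (k m : ℕ) (ns : ℕ → ℕ) (t : ℕ) :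
    braneState q r α k m (braneString ns t k)
      = if t = m then braneCoeff q r α k ns else 0 := by
  classical
  unfold braneState
  by_cases htm : t = m
  · subst htm
    rw [dif_pos ⟨ns, rfl⟩, if_pos rfl]
    have hspec := (⟨ns, rfl⟩ : ∃ ns' : ℕ → ℕ,
      braneString ns t k = braneString ns' t k).choose_spec
    exact (braneCoeff_congr (braneString_inj hspec).2).symm
  · rw [if_neg htm, dif_neg]
    rintro ⟨ns', hns'⟩
    exact htm (braneString_inj hns').1

lemma Qmat_ff (q qm r : ℝ) : Qmat q qm r false false = (q : ℂ) := rfl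
lemma Qmat_ft (q qm r : ℝ) : Qmat q qm r false true = (r : ℂ) := rfl

lemma geom_qIntC {q : ℝ} (hq : (q:ℂ) ≠ 1) (n : ℕ) :
    ∑ j ∈ Finset.range n, (q:ℂ)^j = qIntC q n := by
  rw [geom_sum_eq hq, qIntC,
    div_eq_div_iff (sub_ne_zero.mpr hq) (sub_ne_zero.mpr (Ne.symm hq))]
  ring

lemma geom_qIntC_rev {q : ℝ} (hq : (q:ℂ) ≠ 1) (n : ℕ) :
    ∑ j ∈ Finset.range (n + 1), (q:ℂ)^(n - j) = qIntC q (n + 1) := by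
  rw [← geom_qIntC hq (n+1), ← Finset.sum_range_reflect (fun j => (q:ℂ)^j) (n+1)]
  simp

lemma insertIdx_replicate_le {tl : Str} : ∀ {j n : ℕ}, j ≤ n →
    List.insertIdx (List.replicate n false ++ tl) j false
      = List.replicate (n + 1) false ++ tl := by
  intro j
  induction j with
  | zero =>
    intro n _
    rw [List.insertIdx_zero, List.replicate_succ, List.cons_append]
  | succ j ih =>
    intro n hj
    cases n with
    | zero => omega
    | succ n' =>
      rw [List.replicate_succ, List.cons_append, List.insertIdx_succ_cons,
        ih (by omega), List.replicate_succ (n := n' + 1), List.cons_append]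

lemma insertIdx_shift (a : Bool) (v : Str) : ∀ (n j : ℕ),
    List.insertIdx (List.replicate n false ++ true :: v) (n + 1 + j) a
      = List.replicate n false ++ true :: List.insertIdx v j a := by
  intro n
  induction n with
  | zero =>
    intro j
    have : 0 + 1 + j = j + 1 := by omega
    rw [this]
    simp [List.insertIdx_succ_cons]
  | succ n' ih =>
    intro j
    have h1 : n' + 1 + 1 + j = (n' + 1 + j) + 1 := by omega
    rw [h1, List.replicate_succ, List.cons_append, List.insertIdx_succ_cons, ih]
    simp

lemma drop_shift (v : Str) : ∀ (n j : ℕ),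
    (List.replicate n false ++ true :: v).drop (n + 1 + j) = v.drop j := by
  intro n
  induction n with
  | zero =>
    intro j
    have : 0 + 1 + j = j + 1 := by omega
    rw [this]
    simp
  | succ n' ih =>
    intro j
    have h1 : n' + 1 + 1 + j = (n' + 1 + j) + 1 := by omega
    rw [h1, List.replicate_succ, List.cons_append, List.drop_succ_cons, ih]

lemma drop_le_repl {v : Str} : ∀ {j n : ℕ}, j ≤ n →
    (List.replicate n false ++ true :: v).drop j
      = List.replicate (n - j) false ++ true :: v := by
  intro j
  induction j with
  | zero => intro n _; simp
  | succ j ih =>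
    intro n hj
    cases n with
    | zero => omega
    | succ n' =>
      rw [List.replicate_succ, List.cons_append, List.drop_succ_cons, ih (by omega)]
      have h2 : n' + 1 - (j + 1) = n' - j := by omega
      rw [h2]

lemma prod_map_braneString (q qm r : ℝ) (ns : ℕ → ℕ) (t : ℕ) : ∀ k,
    ((braneString ns t k).map (Qmat q qm r false)).prod
      = (q:ℂ)^((∑ j ∈ Finset.Icc 1 k, ns j) + t) * (r:ℂ)^k := by
  intro k
  induction k with
  | zero => simp [braneString, List.map_replicate, Qmat_ff]
  | succ k ih =>
    simp only [braneString, List.map_append, List.map_replicate, List.map_cons,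
      List.prod_append, List.prod_replicate, List.prod_cons, Qmat_ff, Qmat_ft, ih]
    rw [Finset.sum_Icc_succ_top (by omega : 1 ≤ k + 1)]
    ring

lemma insert_sum (q qm r : ℝ) (hq : (q:ℂ) ≠ 1) (t : ℕ) (ns : ℕ → ℕ) :
    ∀ (k : ℕ) (f : Str → ℂ),
    ∑ j ∈ Finset.range ((braneString ns t k).length + 1),
        (((braneString ns t k).drop j).map (Qmat q qm r false)).prod
          * f ((braneString ns t k).insertIdx j false)
      = (∑ i ∈ Finset.Icc 1 k, qIntC q (ns i + 1)
            * (q:ℂ)^((∑ l ∈ Finset.Icc 1 (i-1), ns l) + t) * (r:ℂ)^i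
            * f (braneString (Function.update ns i (ns i + 1)) t k))
        + qIntC q (t + 1) * f (braneString ns (t + 1) k) := by
  intro k
  induction k with
  | zero =>
    intro f
    simp only [braneString, List.length_replicate, Finset.Icc_self, Finset.Icc_eq_empty_of_lt
      (by omega : (1:ℕ) > 0), Finset.sum_empty, zero_add]
    have hcongr : ∀ j ∈ Finset.range (t + 1),
        ((List.replicate t false).drop j |>.map (Qmat q qm r false)).prod
            * f ((List.replicate t false).insertIdx j false)
          = (q:ℂ)^(t - j) * f (List.replicate (t + 1) false) := by
      intro j hj
      have hj' : j ≤ t := by simpa [Nat.lt_succ_iff] using hj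
      rw [List.drop_replicate, List.map_replicate, List.prod_replicate, Qmat_ff]
      congr 2
      have := insertIdx_replicate_le (tl := ([] : Str)) hj'
      simpa using this
    rw [Finset.sum_congr rfl hcongr, ← Finset.sum_mul, geom_qIntC_rev hq]
  | succ k ih =>
    intro f
    have hlen2 : (braneString ns t (k+1)).length + 1
        = (ns (k + 1) + 1) + ((braneString ns t k).length + 1) := by
      simp only [braneString, List.length_append, List.length_replicate, List.length_cons]
      omega
    rw [hlen2, Finset.sum_range_add]
    -- first block
    have hA : ∀ j ∈ Finset.range (ns (k + 1) + 1),
        ((braneString ns t (k+1)).drop j |>.map (Qmat q qm r false)).prod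
          * f ((braneString ns t (k+1)).insertIdx j false)
        = (q:ℂ)^(ns (k+1) - j) *
            ((r:ℂ) * (((braneString ns t k).map (Qmat q qm r false)).prod
              * f (List.replicate (ns (k+1) + 1) false ++ true :: braneString ns t k))) := by
      intro j hj
      have hj' : j ≤ ns (k + 1) := by simpa [Nat.lt_succ_iff] using hj
      simp only [braneString]
      rw [drop_le_repl hj', insertIdx_replicate_le hj', List.map_append, List.map_replicate,
        List.map_cons, List.prod_append, List.prod_replicate, List.prod_cons, Qmat_ff, Qmat_ft]
      ring
    rw [Finset.sum_congr rfl hA, ← Finset.sum_mul, geom_qIntC_rev hq]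
    -- second block
    have hB : ∀ j ∈ Finset.range ((braneString ns t k).length + 1),
        ((braneString ns t (k+1)).drop (ns (k+1) + 1 + j) |>.map (Qmat q qm r false)).prod
          * f ((braneString ns t (k+1)).insertIdx (ns (k+1) + 1 + j) false)
        = ((braneString ns t k).drop j |>.map (Qmat q qm r false)).prod
            * (fun w => f (List.replicate (ns (k+1)) false ++ true :: w))
                ((braneString ns t k).insertIdx j false) := by
      intro j _
      simp only [braneString]
      rw [drop_shift, insertIdx_shift]
    rw [Finset.sum_congr rfl hB, ih (fun w => f (List.replicate (ns (k+1)) false ++ true :: w))]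
    -- reassemble
    have hup : ∀ i ∈ Finset.Icc 1 k,
        (List.replicate (ns (k+1)) false ++ true ::
            braneString (Function.update ns i (ns i + 1)) t k)
          = braneString (Function.update ns i (ns i + 1)) t (k + 1) := by
      intro i hi
      have hik : i ≠ k + 1 := by
        rcases Finset.mem_Icc.mp hi with ⟨_, h2⟩; omega
      simp only [braneString, Function.update_of_ne (Ne.symm hik)]
    have hfull : (List.replicate (ns (k+1)) false ++ true :: braneString ns (t+1) k)
        = braneString ns (t + 1) (k + 1) := by simp only [braneString]
    have htop : (List.replicate (ns (k+1) + 1) false ++ true :: braneString ns t k)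
        = braneString (Function.update ns (k+1) (ns (k+1) + 1)) t (k + 1) := by
      have hcongr : braneString ns t k
          = braneString (Function.update ns (k+1) (ns (k+1) + 1)) t k :=
        braneString_congr (fun i hi => by
          have hne : i ≠ k + 1 := by
            rcases Finset.mem_Icc.mp hi with ⟨_, h2⟩; omega
          rw [Function.update_of_ne hne])
      simp only [braneString, Function.update_self, hcongr]
    have hsum : ∑ i ∈ Finset.Icc 1 k, qIntC q (ns i + 1)
            * (q:ℂ)^((∑ l ∈ Finset.Icc 1 (i-1), ns l) + t) * (r:ℂ)^i
            * (fun w => f (List.replicate (ns (k+1)) false ++ true :: w))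
                (braneString (Function.update ns i (ns i + 1)) t k)
        = ∑ i ∈ Finset.Icc 1 k, qIntC q (ns i + 1)
            * (q:ℂ)^((∑ l ∈ Finset.Icc 1 (i-1), ns l) + t) * (r:ℂ)^i
            * f (braneString (Function.update ns i (ns i + 1)) t (k + 1)) :=
      Finset.sum_congr rfl (fun i hi => by simp only [hup i hi])
    rw [hsum, hfull, htop, prod_map_braneString]
    rw [Finset.sum_Icc_succ_top (by omega : 1 ≤ k + 1)]
    have hSk : (k + 1) - 1 = k := by omega
    rw [hSk]
    ring

lemma qC_ne_one {q : ℝ} (hq0 : 0 < q) (hq1 : q < 1) : (q:ℂ) ≠ 1 := by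
  intro h
  have : q = 1 := by exact_mod_cast h
  linarith

lemma qpow_ne_one {q : ℝ} (hq0 : 0 < q) (hq1 : q < 1) {n : ℕ} (hn : 1 ≤ n) :
    (q:ℂ)^n ≠ 1 := by
  intro h
  have h2 : ((q^n : ℝ) : ℂ) = 1 := by push_cast; exact h
  have h3 : q^n = 1 := by exact_mod_cast h2
  have : q^n < 1 := pow_lt_one₀ hq0.le hq1 (by omega)
  linarith

lemma qIntC_succ_ne_zero {q : ℝ} (hq0 : 0 < q) (hq1 : q < 1) (n : ℕ) :
    qIntC q (n+1) ≠ 0 := by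
  apply div_ne_zero
  · exact sub_ne_zero.mpr (Ne.symm (qpow_ne_one hq0 hq1 (by omega)))
  · exact sub_ne_zero.mpr (Ne.symm (qC_ne_one hq0 hq1))

lemma qIntC_zero (q : ℝ) : qIntC q 0 = 0 := by simp [qIntC]

lemma qFactC_ne_zero {q : ℝ} (hq0 : 0 < q) (hq1 : q < 1) (n : ℕ) :
    qFactC q n ≠ 0 := by
  unfold qFactC
  exact Finset.prod_ne_zero_iff.mpr fun j _ => qIntC_succ_ne_zero hq0 hq1 j

lemma qFactC_succ (q : ℝ) (n : ℕ) :
    qFactC q (n+1) = qFactC q n * qIntC q (n+1) := Finset.prod_range_succ _ _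

lemma multipliable_qPoch {q : ℝ} (hq0 : 0 < q) (hq1 : q < 1) (x : ℂ)
    (hx : ‖x‖ < 1) :
    Multipliable fun j : ℕ => 1 - x * (q:ℂ)^j := by
  have habs : ∀ j : ℕ, ‖x * (q:ℂ)^j‖ = ‖x‖ * q^j := by
    intro j
    rw [norm_mul, norm_pow, Complex.norm_real, Real.norm_eq_abs, abs_of_pos hq0]
  have hfn : ∀ j : ℕ, (1 : ℂ) - x * (q:ℂ)^j ≠ 0 := by
    intro j
    apply sub_ne_zero.mpr
    intro h
    have : ‖x * (q:ℂ)^j‖ < 1 := by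
      rw [habs j]
      calc ‖x‖ * q^j ≤ ‖x‖ * 1 := by
            apply mul_le_mul_of_nonneg_left _ (norm_nonneg x)
            exact pow_le_one₀ hq0.le hq1.le
        _ < 1 := by rw [mul_one]; exact hx
    rw [← h] at this
    simp at this
  have hlog : Summable fun j : ℕ => Complex.log (1 - x * (q:ℂ)^j) := by
    obtain ⟨N, hN⟩ := exists_pow_lt_of_lt_one
      (show (0:ℝ) < 1 / (2 * (‖x‖ + 1)) by positivity) hq1
    have hax : ‖x‖ * q^N ≤ 1/2 := by
      have h1 : ‖x‖ * q^N ≤ (‖x‖ + 1) * q^N := by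
        apply mul_le_mul_of_nonneg_right _ (by positivity)
        linarith
      have h2 : (‖x‖ + 1) * q^N ≤ (‖x‖ + 1) * (1 / (2 * (‖x‖ + 1))) := by
        apply mul_le_mul_of_nonneg_left hN.le (by positivity)
      have h3 : (‖x‖ + 1) * (1 / (2 * (‖x‖ + 1))) = 1/2 := by
        field_simp
      linarith
    rw [← summable_nat_add_iff N]
    apply Summable.of_norm_bounded
      (g := fun j => (3/2) * ((‖x‖ * q^N) * q^j))
      (((summable_geometric_of_lt_one hq0.le hq1).mul_left _).mul_left _)
    intro j
    have hsmall : ‖-(x * (q:ℂ)^(j+N))‖ ≤ 1/2 := by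
      rw [norm_neg]
      show ‖x * (q:ℂ)^(j+N)‖ ≤ 1/2
      rw [habs, pow_add]
      calc ‖x‖ * (q^j * q^N) = (‖x‖ * q^N) * q^j := by ring
        _ ≤ (1/2) * 1 := by
            apply mul_le_mul hax (pow_le_one₀ hq0.le hq1.le) (by positivity) (by norm_num)
        _ ≤ 1/2 := by norm_num
    have := Complex.norm_log_one_add_half_le_self hsmall
    have harg : (1 : ℂ) + -(x * (q:ℂ)^(j+N)) = 1 - x * (q:ℂ)^(j+N) := by ring
    rw [harg] at this
    refine this.trans ?_
    rw [norm_neg]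
    show 3/2 * ‖x * (q:ℂ)^(j+N)‖ ≤ _
    rw [habs, pow_add]
    apply le_of_eq
    ring
  exact Complex.multipliable_of_summable_log hlog

lemma qPochInf_funEq {q : ℝ} (hq0 : 0 < q) (hq1 : q < 1) (x : ℂ)
    (hx : ‖x‖ < 1) :
    qPochInfC q x = (1 - x) * qPochInfC q (x * (q:ℂ)) := by
  have hxq : ‖x * (q:ℂ)‖ < 1 := by
    rw [norm_mul, Complex.norm_real, Real.norm_eq_abs, abs_of_pos hq0]
    calc ‖x‖ * q ≤ 1 * q := by
          apply mul_le_mul_of_nonneg_right hx.le hq0.le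
      _ = q := one_mul q
      _ < 1 := hq1
  have hm : Multipliable fun j : ℕ => 1 - (x * (q:ℂ)) * (q:ℂ)^j :=
    multipliable_qPoch hq0 hq1 _ hxq
  have hm' : Multipliable fun j : ℕ => 1 - x * (q:ℂ)^(j+1) := by
    refine hm.congr fun j => ?_
    rw [pow_succ]
    ring
  unfold qPochInfC
  rw [tprod_eq_zero_mul' (f := fun j : ℕ => 1 - x * (q:ℂ)^j) hm']
  rw [pow_zero, mul_one]
  congr 1
  exact tprod_congr fun j => by rw [pow_succ]; ring

lemma filter_Icc_le {i k : ℕ} (hi1 : 1 ≤ i) :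
    (Finset.Icc 1 k).filter (fun j => i ≤ j) = Finset.Icc i k := by
  ext j
  simp only [Finset.mem_filter, Finset.mem_Icc]
  omega

lemma braneCoeff_update (q r : ℝ) (hq0 : 0 < q) (hq1 : q < 1) (α : ℕ → ℂ)
    (k : ℕ) (ns : ℕ → ℕ) (i : ℕ) (hi : i ∈ Finset.Icc 1 k)
    (hxlt : ∀ j ∈ Finset.Icc 1 (k-1),
      ‖α (j+1) * (r:ℂ)^j * (q:ℂ)^(∑ l ∈ Finset.Icc 1 j, ns l) / α 1‖ < 1) :
    qIntC q (ns i + 1) * braneCoeff q r α k (Function.update ns i (ns i + 1))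
      = α i * braneCoeff q r α k ns
          * ∏ j ∈ Finset.Icc i (k-1),
              (1 - α (j+1) * (r:ℂ)^j * (q:ℂ)^(∑ l ∈ Finset.Icc 1 j, ns l) / α 1) := by
  classical
  obtain ⟨hi1, hik⟩ := Finset.mem_Icc.mp hi
  unfold braneCoeff
  have hAupd : (∏ l ∈ Finset.Icc 1 k,
        α l ^ (Function.update ns i (ns i + 1) l) / qFactC q (Function.update ns i (ns i + 1) l))
      = (α i ^ (ns i + 1) / qFactC q (ns i + 1)) *
          ∏ l ∈ (Finset.Icc 1 k).erase i, α l ^ ns l / qFactC q (ns l) := by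
    rw [← Finset.mul_prod_erase _ _ hi, Function.update_self]
    congr 1
    exact Finset.prod_congr rfl fun l hl => by
      rw [Function.update_of_ne (Finset.ne_of_mem_erase hl)]
  have hAns : (∏ l ∈ Finset.Icc 1 k, α l ^ ns l / qFactC q (ns l))
      = (α i ^ ns i / qFactC q (ns i)) *
          ∏ l ∈ (Finset.Icc 1 k).erase i, α l ^ ns l / qFactC q (ns l) :=
    (Finset.mul_prod_erase _ _ hi).symm
  have hApiece : qIntC q (ns i + 1) * (α i ^ (ns i + 1) / qFactC q (ns i + 1))
      = α i * (α i ^ ns i / qFactC q (ns i)) := by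
    rw [qFactC_succ, pow_succ]
    have h1 := qFactC_ne_zero hq0 hq1 (ns i)
    have h2 := qIntC_succ_ne_zero hq0 hq1 (ns i)
    field_simp
  have hBj : ∀ j ∈ Finset.Icc 1 (k-1),
      (qPochInfC q (α (j+1) * (r:ℂ)^j *
          (q:ℂ)^(∑ l ∈ Finset.Icc 1 j, Function.update ns i (ns i + 1) l) / α 1))⁻¹
      = (if i ≤ j then
            (1 - α (j+1) * (r:ℂ)^j * (q:ℂ)^(∑ l ∈ Finset.Icc 1 j, ns l) / α 1) else 1)
          * (qPochInfC q (α (j+1) * (r:ℂ)^j *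
              (q:ℂ)^(∑ l ∈ Finset.Icc 1 j, ns l) / α 1))⁻¹ := by
    intro j hj
    by_cases hij : i ≤ j
    · rw [if_pos hij]
      have hmem : i ∈ Finset.Icc 1 j := Finset.mem_Icc.mpr ⟨hi1, hij⟩
      have hsum : (∑ l ∈ Finset.Icc 1 j, Function.update ns i (ns i + 1) l)
          = (∑ l ∈ Finset.Icc 1 j, ns l) + 1 := by
        rw [Finset.sum_update_of_mem hmem, ← Finset.add_sum_erase _ _ hmem,
          Finset.sdiff_singleton_eq_erase]
        omega
      rw [hsum]
      have harg : α (j+1) * (r:ℂ)^j * (q:ℂ)^((∑ l ∈ Finset.Icc 1 j, ns l) + 1) / α 1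
          = (α (j+1) * (r:ℂ)^j * (q:ℂ)^(∑ l ∈ Finset.Icc 1 j, ns l) / α 1) * (q:ℂ) := by
        rw [pow_succ]
        ring
      rw [harg]
      have hxj := hxlt j hj
      have hne : (1:ℂ) - α (j+1) * (r:ℂ)^j * (q:ℂ)^(∑ l ∈ Finset.Icc 1 j, ns l) / α 1 ≠ 0 := by
        apply sub_ne_zero.mpr
        intro h
        rw [← h] at hxj
        simp at hxj
      have hfe := qPochInf_funEq hq0 hq1 _ hxj
      rw [hfe, mul_inv, ← mul_assoc, mul_inv_cancel₀ hne, one_mul]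
    · rw [if_neg hij, one_mul]
      have hsum : (∑ l ∈ Finset.Icc 1 j, Function.update ns i (ns i + 1) l)
          = ∑ l ∈ Finset.Icc 1 j, ns l := by
        refine Finset.sum_congr rfl fun l hl => ?_
        have : l ≠ i := by
          rcases Finset.mem_Icc.mp hl with ⟨_, h2⟩; omega
        rw [Function.update_of_ne this]
      rw [hsum]
  have hBupd : (∏ j ∈ Finset.Icc 1 (k-1),
        (qPochInfC q (α (j+1) * (r:ℂ)^j *
          (q:ℂ)^(∑ l ∈ Finset.Icc 1 j, Function.update ns i (ns i + 1) l) / α 1))⁻¹)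
      = (∏ j ∈ Finset.Icc i (k-1),
          (1 - α (j+1) * (r:ℂ)^j * (q:ℂ)^(∑ l ∈ Finset.Icc 1 j, ns l) / α 1))
        * ∏ j ∈ Finset.Icc 1 (k-1),
            (qPochInfC q (α (j+1) * (r:ℂ)^j *
              (q:ℂ)^(∑ l ∈ Finset.Icc 1 j, ns l) / α 1))⁻¹ := by
    rw [Finset.prod_congr rfl hBj, Finset.prod_mul_distrib]
    congr 1
    rw [← filter_Icc_le (k := k - 1) hi1, Finset.prod_filter]
  rw [hAupd, hBupd, hAns]
  set A1 := α i ^ (ns i + 1) / qFactC q (ns i + 1) with hA1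
  set A0 := α i ^ ns i / qFactC q (ns i) with hA0
  set R := ∏ l ∈ (Finset.Icc 1 k).erase i, α l ^ ns l / qFactC q (ns l) with hR
  set E := ∏ j ∈ Finset.Icc i (k-1),
      (1 - α (j+1) * (r:ℂ)^j * (q:ℂ)^(∑ l ∈ Finset.Icc 1 j, ns l) / α 1) with hE
  set B := ∏ j ∈ Finset.Icc 1 (k-1),
      (qPochInfC q (α (j+1) * (r:ℂ)^j *
        (q:ℂ)^(∑ l ∈ Finset.Icc 1 j, ns l) / α 1))⁻¹ with hB
  linear_combination (R * E * B) * hApiece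

lemma telescope (q r : ℝ) (α : ℕ → ℂ) (ns : ℕ → ℕ) (hα1 : α 1 ≠ 0) :
    ∀ k, 1 ≤ k →
    ∑ i ∈ Finset.Icc 1 k, α i * (r:ℂ)^i * (q:ℂ)^(∑ l ∈ Finset.Icc 1 (i-1), ns l) *
        ∏ j ∈ Finset.Icc i (k-1),
          (1 - α (j+1) * (r:ℂ)^j * (q:ℂ)^(∑ l ∈ Finset.Icc 1 j, ns l) / α 1)
      = α 1 * (r:ℂ) := by
  intro k
  induction k with
  | zero => omega
  | succ k ih =>
    intro _
    simp only [Nat.add_sub_cancel]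
    rcases Nat.eq_zero_or_pos k with hk0 | hkpos
    · subst hk0
      rw [Finset.Icc_self, Finset.sum_singleton]
      norm_num [Finset.Icc_eq_empty (show ¬(1:ℕ) ≤ 0 by omega)]
    · rw [Finset.sum_Icc_succ_top (by omega : 1 ≤ k + 1)]
      simp only [Nat.add_sub_cancel]
      have hsplit : ∀ i ∈ Finset.Icc 1 k,
          α i * (r:ℂ)^i * (q:ℂ)^(∑ l ∈ Finset.Icc 1 (i-1), ns l) *
            ∏ j ∈ Finset.Icc i k,
              (1 - α (j+1) * (r:ℂ)^j * (q:ℂ)^(∑ l ∈ Finset.Icc 1 j, ns l) / α 1)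
          = (α i * (r:ℂ)^i * (q:ℂ)^(∑ l ∈ Finset.Icc 1 (i-1), ns l) *
              ∏ j ∈ Finset.Icc i (k-1),
                (1 - α (j+1) * (r:ℂ)^j * (q:ℂ)^(∑ l ∈ Finset.Icc 1 j, ns l) / α 1))
            * (1 - α (k+1) * (r:ℂ)^k * (q:ℂ)^(∑ l ∈ Finset.Icc 1 k, ns l) / α 1) := by
        intro i hi
        have h1 : k = (k - 1) + 1 := by omega
        have h2 : i ≤ (k-1) + 1 := by
          rcases Finset.mem_Icc.mp hi with ⟨_, hh⟩; omega
        rw [show Finset.Icc i k = Finset.Icc i ((k-1)+1) from by rw [← h1],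
          Finset.prod_Icc_succ_top h2, show (k-1)+1 = k from by omega]
        ring
      rw [Finset.sum_congr rfl hsplit, ← Finset.sum_mul, ih hkpos]
      rw [Finset.Icc_eq_empty (by omega : ¬ k + 1 ≤ k), Finset.prod_empty]
      have hXk : α 1 * (r:ℂ) * (α (k+1) * (r:ℂ)^k * (q:ℂ)^(∑ l ∈ Finset.Icc 1 k, ns l) / α 1)
          = α (k+1) * (r:ℂ)^(k+1) * (q:ℂ)^(∑ l ∈ Finset.Icc 1 k, ns l) := by
        field_simp
        ring
      linear_combination -hXk

lemma count_true_insertIdx : ∀ (u : Str) (j : ℕ), j ≤ u.length →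
    (u.insertIdx j false).count true = u.count true := by
  intro u
  induction u with
  | nil =>
    intro j hj
    have : j = 0 := by simpa using hj
    subst this
    simp [List.insertIdx_zero]
  | cons x s ih =>
    intro j hj
    cases j with
    | zero => simp [List.insertIdx_zero, List.count_cons]
    | succ j' =>
      rw [List.insertIdx_succ_cons, List.count_cons, List.count_cons,
        ih j' (by simpa using hj)]

lemma braneState_eq_zero_of_count {q r : ℝ} {α : ℕ → ℂ} {k m : ℕ} {w : Str}
    (h : w.count true ≠ k) : braneState q r α k m w = 0 := by
  unfold braneState
  rw [dif_neg]
  rintro ⟨ns, rfl⟩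
  exact h (count_true_braneString ns m k)
end DSSYK

open DSSYK in
/-- general matter-brane screening.  Under the stated conditions on
`q, r, k, α₁,…,α_k`, the matter-brane states satisfy, coordinatewise on binary strings,
`a_{R,0} V_m = [m]_q·V_{m−1} + α₁·r·q^m·V_m`, so a right-boundary observer acting with
`a_{R,0}, a†_{R,0}` sees a single EoW brane of effective tension `μ = α₁·r`. -/
theorem stmt_13 (q qm r : ℝ) (hq0 : 0 < q) (hq1 : q < 1)
    (k : ℕ) (hk : 1 ≤ k) (α : ℕ → ℂ)
    (hα : ∀ i ∈ Finset.Icc 1 k, α i ≠ 0)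
    (hscreen : ∀ i : ℕ, 1 ≤ i → i ≤ k - 1 →
      ‖α (i + 1)‖ * |r| ^ i < ‖α 1‖) :
    ∀ (m : ℕ) (w : Str),
      coordAct (annR (Qmat q qm r) false) (braneState q r α k m) w
        = qIntC q m * braneState q r α k (m - 1) w
          + α 1 * (r : ℂ) * (q : ℂ) ^ m * braneState q r α k m w := by
  intro m u
  have hqne : (q:ℂ) ≠ 1 := qC_ne_one hq0 hq1
  rw [coordAct_annR]
  by_cases hcnt : u.count true = k
  · obtain ⟨ns, t, hu⟩ := parse u
    rw [hcnt] at hu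
    subst hu
    rw [insert_sum q qm r hqne t ns k (braneState q r α k m)]
    simp only [braneState_eval]
    have hα1 : α 1 ≠ 0 := hα 1 (Finset.mem_Icc.mpr ⟨le_refl 1, hk⟩)
    by_cases htm : t = m
    · subst htm
      have hxlt : ∀ j ∈ Finset.Icc 1 (k-1),
          ‖α (j+1) * (r:ℂ)^j * (q:ℂ)^(∑ l ∈ Finset.Icc 1 j, ns l) / α 1‖ < 1 := by
        intro j hj
        obtain ⟨hj1, hj2⟩ := Finset.mem_Icc.mp hj
        rw [norm_div, norm_mul, norm_mul, norm_pow, norm_pow, Complex.norm_real,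
          Complex.norm_real, Real.norm_eq_abs, Real.norm_eq_abs, abs_of_pos hq0,
          div_lt_one (norm_pos_iff.mpr hα1)]
        calc ‖α (j+1)‖ * |r|^j * q^(∑ l ∈ Finset.Icc 1 j, ns l)
            ≤ ‖α (j+1)‖ * |r|^j * 1 := by
              apply mul_le_mul_of_nonneg_left (pow_le_one₀ hq0.le hq1.le) (by positivity)
          _ = ‖α (j+1)‖ * |r|^j := mul_one _
          _ < ‖α 1‖ := hscreen j hj1 hj2
      have h1 : ¬ (t + 1 = t) := by omega
      simp only [eq_self_iff_true, if_true, if_neg h1]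
      have hRHS0 : qIntC q t * (if t = t - 1 then braneCoeff q r α k ns else 0) = 0 := by
        rcases Nat.eq_zero_or_pos t with h | h
        · subst h; rw [qIntC_zero]; exact zero_mul _
        · rw [if_neg (by omega)]; exact mul_zero _
      rw [hRHS0]
      have hkey : ∀ i ∈ Finset.Icc 1 k,
          qIntC q (ns i + 1) * (q:ℂ)^((∑ l ∈ Finset.Icc 1 (i-1), ns l) + t) * (r:ℂ)^i
              * braneCoeff q r α k (Function.update ns i (ns i + 1))
            = ((q:ℂ)^t * braneCoeff q r α k ns) *
                (α i * (r:ℂ)^i * (q:ℂ)^(∑ l ∈ Finset.Icc 1 (i-1), ns l) *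
                  ∏ j ∈ Finset.Icc i (k-1),
                    (1 - α (j+1) * (r:ℂ)^j * (q:ℂ)^(∑ l ∈ Finset.Icc 1 j, ns l) / α 1)) := by
        intro i hi
        have h := braneCoeff_update q r hq0 hq1 α k ns i hi hxlt
        linear_combination ((q:ℂ)^((∑ l ∈ Finset.Icc 1 (i-1), ns l) + t) * (r:ℂ)^i) * h
      rw [Finset.sum_congr rfl hkey, ← Finset.mul_sum, telescope q r α ns hα1 k hk]
      ring
    · have hsum0 : (∑ i ∈ Finset.Icc 1 k, qIntC q (ns i + 1)
            * (q:ℂ)^((∑ l ∈ Finset.Icc 1 (i-1), ns l) + t) * (r:ℂ)^i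
            * (if t = m then braneCoeff q r α k (Function.update ns i (ns i + 1)) else 0)) = 0 :=
        Finset.sum_eq_zero (fun i _ => by rw [if_neg htm, mul_zero])
      rw [hsum0, if_neg htm]
      by_cases htm1 : t + 1 = m
      · subst htm1
        simp only [Nat.add_sub_cancel, eq_self_iff_true, if_true]
        ring
      · rw [if_neg htm1, if_neg (by omega : ¬ t = m - 1)]
        ring
  · have hz : ∀ j ∈ Finset.range (u.length + 1),
        ((u.drop j).map (Qmat q qm r false)).prod
          * braneState q r α k m (u.insertIdx j false) = 0 := by
      intro j hj
      rw [braneState_eq_zero_of_count (by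
        rw [count_true_insertIdx u j (Nat.lt_succ_iff.mp (Finset.mem_range.mp hj))]
        exact hcnt), mul_zero]
    rw [Finset.sum_eq_zero hz, braneState_eq_zero_of_count hcnt,
      braneState_eq_zero_of_count hcnt]
    ring
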